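/- arXiv:1711.11234 — 2 statements merged into one kernel-verified Lean document; each statement's English description precedes it below -/
import Mathlib

section
/- Let g be a root-reductive Lie algebra with splitting maximal toral subalgebra h and Dynkin Borel subalgebra b ⊇ h, and let M be an indecomposable object of the extended category O-bar. Then every g-module endomorphism φ of M is either an automorphism or locally nilpotent, i.e., for every v ∈ M there exists k ∈ ℤ≥0 with φ^k(v) = 0. -/
noncomputable section
namespace Paper

variable (K : Type) [Field K] [IsAlgClosed K] [CharZero K]
variable (g : Type) [LieRing g] [LieAlgebra K g]

def adWeightSpace (h : LieSubalgebra K g) (α : Module.Dual K h) : Submodule K g where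
  carrier := {x | ∀ H : h, ⁅(H : g), x⁆ = α H • x}
  add_mem' := by intro a b ha hb H; rw [lie_add, ha H, hb H, smul_add]
  zero_mem' := by intro H; rw [lie_zero, smul_zero]
  smul_mem' := by intro c x hx H; rw [lie_smul, hx H, smul_comm]

def IsRootOf (h : LieSubalgebra K g) (α : Module.Dual K h) : Prop :=
  α ≠ 0 ∧ adWeightSpace K g h α ≠ ⊥

def IsToralIn (s t : LieSubalgebra K g) : Prop :=
  t ≤ s ∧ IsLieAbelian t ∧
    s.toSubmodule ≤ ⨆ α : Module.Dual K t, s.toSubmodule ⊓ adWeightSpace K g t α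

def IsMaxToralIn (s t : LieSubalgebra K g) : Prop :=
  IsToralIn K g s t ∧ ∀ t' : LieSubalgebra K g, IsToralIn K g s t' → t ≤ t' → t' = t

/-- A root-reductive Lie algebra `g` together with a splitting maximal toral subalgebra `h`
and a splitting Borel subalgebra `b ⊇ h` determined by a set `pos` of positive roots. -/
structure Setup where
  /-- the exhausting chain of finite-dimensional reductive subalgebras -/
  F : ℕ → LieSubalgebra K g
  F_mono : Monotone F
  F_exhaust : ∀ x : g, ∃ n, x ∈ F n
  F_findim : ∀ n, FiniteDimensional K (F n)
  /-- each `F n` is reductive: every abelian ideal is central -/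
  F_reductive : ∀ n, ∀ I : LieIdeal K (F n), IsLieAbelian I → I ≤ LieAlgebra.center K (F n)
  /-- the nested chain of Cartan subalgebras witnessing the root inclusions -/
  C : ℕ → LieSubalgebra K g
  C_mono : Monotone C
  C_le : ∀ n, C n ≤ F n
  C_cartan : ∀ n, (LieSubalgebra.comap (F n).incl (C n)).IsCartanSubalgebra
  /-- each inclusion `F n ↪ F (n+1)` is a root inclusion with respect to `C (n+1)`:
  every root space of `F n` relative to `C n` is a root space of `F (n+1)` -/
  C_rootIncl : ∀ n, ∀ α : Module.Dual K (C n), α ≠ 0 →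
    (F n).toSubmodule ⊓ adWeightSpace K g (C n) α ≠ ⊥ →
    ∃ β : Module.Dual K (C (n + 1)),
      (F n).toSubmodule ⊓ adWeightSpace K g (C n) α
        = (F (n + 1)).toSubmodule ⊓ adWeightSpace K g (C (n + 1)) β
  /-- the splitting maximal toral subalgebra -/
  h : LieSubalgebra K g
  h_maxToral : ∀ n, IsMaxToralIn K g (F n) (h ⊓ F n)
  /-- `g` is the direct sum of its `h`-weight spaces -/
  h_indep : iSupIndep fun α : Module.Dual K h => adWeightSpace K g h α
  h_span : (⨆ α : Module.Dual K h, adWeightSpace K g h α) = ⊤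
  /-- the set `Δ⁺` of positive roots -/
  pos : Set (Module.Dual K h)
  pos_root : ∀ α ∈ pos, IsRootOf K g h α
  pos_add : ∀ α ∈ pos, ∀ β ∈ pos, IsRootOf K g h (α + β) → α + β ∈ pos
  pos_polar : ∀ α : Module.Dual K h, IsRootOf K g h α → (α ∈ pos ↔ ¬(-α ∈ pos))
  neg_add : ∀ α β : Module.Dual K h, IsRootOf K g h α → IsRootOf K g h β →
    α ∉ pos → β ∉ pos → IsRootOf K g h (α + β) → α + β ∉ pos
  /-- the splitting Borel subalgebra -/
  b : LieSubalgebra K g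
  b_eq : b.toSubmodule = h.toSubmodule ⊔ ⨆ α ∈ pos, adWeightSpace K g h α


variable {K g}

namespace Setup

variable (S : Setup K g)

/-- `h ∩ g_n`. -/
def hn (n : ℕ) : LieSubalgebra K g := S.h ⊓ S.F n

/-- restriction of a functional on `h` to `h ∩ g_n`. -/
def resDual (n : ℕ) (lam : Module.Dual K S.h) : Module.Dual K (S.hn n) :=
  lam.comp (LieSubalgebra.inclusion (inf_le_left : S.hn n ≤ S.h)).toLinearMap

/-- the `α`-root space of `g_n` relative to `h ∩ g_n`. -/
def rootSpaceN (n : ℕ) (α : Module.Dual K (S.hn n)) : Submodule K g :=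
  (S.F n).toSubmodule ⊓ adWeightSpace K g (S.hn n) α

/-- the set of `b`-positive roots of `g_n`. -/
def posRootsN (n : ℕ) : Set (Module.Dual K (S.hn n)) :=
  {α | α ≠ 0 ∧ S.rootSpaceN n α ≠ ⊥ ∧ S.rootSpaceN n α ≤ S.b.toSubmodule}

/-- `ρ_n`, the half sum of the positive roots of `g_n` with respect to `b ∩ g_n`. -/
def rhoN (n : ℕ) : Module.Dual K (S.hn n) :=
  (2 : K)⁻¹ • ∑ᶠ α ∈ S.posRootsN n, α

/-- `α` is a simple `b`-positive root: it is positive and cannot be written as a sum of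
two or more positive roots. -/
def IsSimpleRoot (α : Module.Dual K S.h) : Prop :=
  α ∈ S.pos ∧ ¬∃ s : Multiset (Module.Dual K S.h),
    2 ≤ Multiset.card s ∧ (∀ β ∈ s, β ∈ S.pos) ∧ s.sum = α

/-- `b` is a Dynkin Borel subalgebra: it is generated, as a Lie subalgebra, by `h` together
with the simple root spaces. -/
def IsDynkin : Prop :=
  S.b = LieSubalgebra.lieSpan K g
    ((S.h : Set g) ∪ ⋃ α ∈ {α | S.IsSimpleRoot α}, (adWeightSpace K g S.h α : Set g))

/-- the partial order `≼` on `h^*`: `lam ≼ mu` iff `mu - lam` is a `ℤ≥0`-linear combination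
of positive roots. -/
def wle (lam mu : Module.Dual K S.h) : Prop :=
  ∃ s : Multiset (Module.Dual K S.h), (∀ β ∈ s, β ∈ S.pos) ∧ mu - lam = s.sum

/-- `g` is locally semisimple: each `g_n` is a semisimple Lie algebra. -/
def IsLocallySemisimple : Prop := ∀ n, LieAlgebra.IsSemisimple K (S.F n)

end Setup


/-- the universal enveloping algebra of `g`. -/
abbrev Env (K g : Type) [Field K] [LieRing g] [LieAlgebra K g] : Type :=
  UniversalEnvelopingAlgebra K g

namespace Setup

variable {K : Type} [Field K] [IsAlgClosed K] [CharZero K]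
variable {g : Type} [LieRing g] [LieAlgebra K g]
variable (S : Setup K g)

/-- the nilpotent radical `n⁺ = ⨁_{α ∈ Δ⁺} g^α` of `b`, as a subspace of `g`. -/
def nplus : Submodule K g := ⨆ α ∈ S.pos, adWeightSpace K g S.h α

/-- the left ideal of `U(g)` generated by `n⁺` and the elements `H - lam(H)`, `H ∈ h`. -/
def vermaIdeal (lam : Module.Dual K S.h) : Submodule (Env K g) (Env K g) :=
  Submodule.span (Env K g)
    ((UniversalEnvelopingAlgebra.ι K '' (S.nplus : Set g)) ∪
      Set.range fun H : S.h =>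
        UniversalEnvelopingAlgebra.ι K (H : g) - algebraMap K (Env K g) (lam H))

/-- the Verma module `M(lam) = U(g)/I`. -/
abbrev Verma (lam : Module.Dual K S.h) : Type := Env K g ⧸ S.vermaIdeal lam

/-- the maximal proper submodule of the Verma module `M(lam)`,
i.e. the sum of all proper submodules. -/
def maxSub (lam : Module.Dual K S.h) : Submodule (Env K g) (S.Verma lam) :=
  sSup {N : Submodule (Env K g) (S.Verma lam) | N ≠ ⊤}

/-- the simple module `L(lam)`, the unique simple quotient of `M(lam)`. -/
abbrev SimpleL (lam : Module.Dual K S.h) : Type := S.Verma lam ⧸ S.maxSub lam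

/-- `H` is the coroot `h_α` of the root `α`:  `α(H) = 2` and `H ∈ [g^α, g^{-α}]`. -/
def IsCoroot (α : Module.Dual K S.h) (H : S.h) : Prop :=
  α H = 2 ∧ ∃ x ∈ adWeightSpace K g S.h α, ∃ y ∈ adWeightSpace K g S.h (-α),
    (H : g) = ⁅x, y⁆

/-- the dot-reflection `s_α · mu = mu - (mu + ρ)(h_α) α` associated to a root `α`
with coroot `Hα`, relative to the half sum `ρ` of positive roots. -/
def dotReflect (ρ α : Module.Dual K S.h) (Hα : S.h) (mu : Module.Dual K S.h) :
    Module.Dual K S.h :=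
  mu - ((mu + ρ) Hα) • α

/-- `ρ` is the global half sum of positive roots: its restriction to each `h ∩ g_n`
is the half sum `ρ_n` of positive roots of `g_n`. -/
def IsGlobalRho (ρ : Module.Dual K S.h) : Prop := ∀ n : ℕ, S.resDual n ρ = S.rhoN n

/-- `lam` is strongly linked to `mu` (relative to `ρ`). -/
inductive StronglyLinked (ρ : Module.Dual K S.h) :
    Module.Dual K S.h → Module.Dual K S.h → Prop
  | refl (mu : Module.Dual K S.h) : StronglyLinked ρ mu mu
  | step {lam mu : Module.Dual K S.h} (α : Module.Dual K S.h) (Hα : S.h) :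
      α ∈ S.pos → S.IsCoroot α Hα →
      S.wle (S.dotReflect ρ α Hα mu) mu →
      StronglyLinked ρ lam (S.dotReflect ρ α Hα mu) →
      StronglyLinked ρ lam mu

/-- `lam` is antidominant: `(lam + ρ)(h_α)` is not a positive integer
for any positive root `α`. -/
def IsAntidominant (ρ lam : Module.Dual K S.h) : Prop :=
  ∀ α ∈ S.pos, ∀ Hα : S.h, S.IsCoroot α Hα → ¬∃ k : ℕ, 0 < k ∧ (lam + ρ) Hα = (k : K)

/-- `lam` is almost antidominant: `(lam + ρ)(h_α)` is a positive integer
for only finitely many positive roots `α`. -/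
def IsAlmostAntidominant (ρ lam : Module.Dual K S.h) : Prop :=
  {α | α ∈ S.pos ∧ ∃ Hα : S.h, S.IsCoroot α Hα ∧
    ∃ k : ℕ, 0 < k ∧ (lam + ρ) Hα = (k : K)}.Finite

end Setup

namespace Setup

variable {K : Type} [Field K] [IsAlgClosed K] [CharZero K]
variable {g : Type} [LieRing g] [LieAlgebra K g]
variable (S : Setup K g)

/-- the reflection `s_α : mu ↦ mu - mu(h_α) α`, as a linear map on `h^*`. -/
def reflectionMap (α : Module.Dual K S.h) (Hα : S.h) :
    Module.Dual K S.h →ₗ[K] Module.Dual K S.h where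
  toFun mu := mu - mu Hα • α
  map_add' mu ν := by
    simp only [LinearMap.add_apply, add_smul]
    abel
  map_smul' c mu := by
    simp only [LinearMap.smul_apply, RingHom.id_apply, smul_sub, smul_smul, smul_eq_mul]

/-- the reflection `s_α` associated to a root `α` with coroot `Hα`,
as a linear automorphism of `h^*`. -/
def reflection (α : Module.Dual K S.h) (Hα : S.h) (h2 : α Hα = 2) :
    Module.Dual K S.h ≃ₗ[K] Module.Dual K S.h :=
  LinearEquiv.ofInvolutive (S.reflectionMap α Hα) (by
    intro mu
    show S.reflectionMap α Hα (mu - mu Hα • α) = mu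
    show (mu - mu Hα • α) - ((mu - mu Hα • α) Hα) • α = mu
    rw [LinearMap.sub_apply, LinearMap.smul_apply, h2, smul_eq_mul]
    module)

/-- the Weyl group of `g`, realized as the group of linear automorphisms of `h^*`
generated by the reflections in the roots. -/
def weylGroup : Subgroup (Module.Dual K S.h ≃ₗ[K] Module.Dual K S.h) :=
  Subgroup.closure
    {w | ∃ (α : Module.Dual K S.h) (Hα : S.h) (hc : S.IsCoroot α Hα),
      IsRootOf K g S.h α ∧ w = S.reflection α Hα hc.1}

/-- the dot action `w · mu = w(mu + ρ) - ρ`. -/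
def dotAct (ρ : Module.Dual K S.h) (w : Module.Dual K S.h ≃ₗ[K] Module.Dual K S.h)
    (mu : Module.Dual K S.h) : Module.Dual K S.h :=
  w (mu + ρ) - ρ

/-- the root lattice `Λ`, the `ℤ`-span of the roots in `h^*`. -/
def rootLattice : Submodule ℤ (Module.Dual K S.h) :=
  Submodule.span ℤ {α : Module.Dual K S.h | IsRootOf K g S.h α}

end Setup

variable {K : Type} [Field K] [IsAlgClosed K] [CharZero K]
variable {g : Type} [LieRing g] [LieAlgebra K g]

lemma env_smul_comm {M : Type} [AddCommGroup M] [Module K M] [Module (Env K g) M]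
    [IsScalarTower K (Env K g) M] (c : K) (r : Env K g) (m : M) :
    r • (c • m) = c • (r • m) := by
  rw [← algebraMap_smul (Env K g) c m, ← mul_smul, ← Algebra.commutes, mul_smul,
    algebraMap_smul]

namespace Setup

variable (S : Setup K g)

section Modules

variable (M : Type) [AddCommGroup M] [Module K M] [Module (Env K g) M]
  [IsScalarTower K (Env K g) M]

/-- the `lam`-weight space of a `U(g)`-module `M`. -/
def wtSpace (lam : Module.Dual K S.h) : Submodule K M where
  carrier := {m | ∀ H : S.h, UniversalEnvelopingAlgebra.ι K (H : g) • m = lam H • m}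
  add_mem' := by
    intro a b ha hb H
    rw [smul_add, ha H, hb H, smul_add]
  zero_mem' := by
    intro H
    rw [smul_zero, smul_zero]
  smul_mem' := by
    intro c x hx H
    rw [env_smul_comm, hx H, smul_comm]

/-- the support of `M`: the set of `h`-weights of `M`. -/
def support : Set (Module.Dual K S.h) := {lam | S.wtSpace M lam ≠ ⊥}

/-- `M` is an object of the extended category `O-bar`:  it is an `h`-weight module with
finite-dimensional weight spaces and `U(n⁺) ⬝ v` is finite dimensional for every `v ∈ M`. -/
structure InO : Prop where
  indep : iSupIndep fun lam : Module.Dual K S.h => S.wtSpace M lam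
  span : (⨆ lam : Module.Dual K S.h, S.wtSpace M lam) = ⊤
  finite : ∀ lam : Module.Dual K S.h, FiniteDimensional K (S.wtSpace M lam)
  locFin : ∀ v : M, ∃ N : Submodule K M, FiniteDimensional K N ∧ v ∈ N ∧
    ∀ x ∈ S.nplus, ∀ m ∈ N, UniversalEnvelopingAlgebra.ι K x • m ∈ N

end Modules

end Setup

/-- a `U(g)`-module is indecomposable if it is nonzero and is not the direct sum of two
nonzero submodules. -/
def Indecomposable (M : Type) [AddCommGroup M] [Module (Env K g) M] : Prop :=
  (⊤ : Submodule (Env K g) M) ≠ ⊥ ∧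
    ∀ N₁ N₂ : Submodule (Env K g) M, IsCompl N₁ N₂ → N₁ = ⊥ ∨ N₂ = ⊥

/-- the subquotient `N₂ / N₁` of a pair of submodules. -/
abbrev subQuot {M : Type} [AddCommGroup M] [Module (Env K g) M]
    (N₁ N₂ : Submodule (Env K g) M) : Type :=
  N₂ ⧸ (N₁.comap N₂.subtype)


section FittingAux

variable {K : Type} [Field K] [IsAlgClosed K] [CharZero K]
variable {g : Type} [LieRing g] [LieAlgebra K g]
variable {S : Setup K g} {M : Type} [AddCommGroup M] [Module K M] [Module (Env K g) M]
  [IsScalarTower K (Env K g) M]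

/-- A `U(g)`-linear endomorphism preserves each weight space. -/
lemma wtSpace_stable (φ : Module.End (Env K g) M) (lam : Module.Dual K S.h) :
    ∀ v ∈ S.wtSpace M lam, (LinearMap.restrictScalars K φ) v ∈ S.wtSpace M lam := by
  intro v hv H
  have h1 : UniversalEnvelopingAlgebra.ι K (H : g) • v = lam H • v := hv H
  show UniversalEnvelopingAlgebra.ι K (H : g) • φ v = lam H • φ v
  rw [← map_smul φ, h1, LinearMap.map_smul_of_tower]

/-- The locally nilpotent part of an endomorphism, as a `U(g)`-submodule. -/
def fittingZero (φ : Module.End (Env K g) M) : Submodule (Env K g) M where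
  carrier := {v | ∃ k : ℕ, (φ ^ k) v = 0}
  add_mem' := by
    rintro a b ⟨k, hk⟩ ⟨l, hl⟩
    refine ⟨k + l, ?_⟩
    have ha : (φ ^ (k + l)) a = (φ ^ l) ((φ ^ k) a) := by
      rw [add_comm, pow_add, Module.End.mul_apply]
    have hb : (φ ^ (k + l)) b = (φ ^ k) ((φ ^ l) b) := by
      rw [pow_add, Module.End.mul_apply]
    rw [map_add, ha, hb, hk, hl, map_zero, map_zero, add_zero]
  zero_mem' := ⟨0, map_zero _⟩
  smul_mem' := by
    rintro r v ⟨k, hk⟩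
    exact ⟨k, by rw [map_smul, hk, smul_zero]⟩

end FittingAux

set_option maxHeartbeats 1000000 in
set_option synthInstance.maxHeartbeats 400000 in
/-- Every `g`-module endomorphism of an indecomposable object `M` of
`O-bar` is either an automorphism or locally nilpotent. -/
theorem endomorphism_bijective_or_locally_nilpotent
    (K : Type) [Field K] [IsAlgClosed K] [CharZero K]
    (g : Type) [LieRing g] [LieAlgebra K g] (S : Setup K g) (hDynkin : S.IsDynkin)
    (M : Type) [AddCommGroup M] [Module K M] [Module (Env K g) M]
    [IsScalarTower K (Env K g) M]
    (hM : S.InO M) (hInd : Indecomposable (K := K) (g := g) M) (φ : Module.End (Env K g) M) :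
    Function.Bijective φ ∨ ∀ v : M, ∃ k : ℕ, (⇑φ)^[k] v = 0 := by
  classical
  -- the weight spaces
  set W : Module.Dual K S.h → Submodule K M := S.wtSpace M with hWdef
  -- φ as a K-linear map, and its restrictions to the weight spaces
  set Φ : M →ₗ[K] M := LinearMap.restrictScalars K φ with hΦdef
  have hΦφ : ∀ (m : ℕ) (v : M), (Φ ^ m) v = (φ ^ m) v := by
    intro m v
    rw [Module.End.pow_apply, Module.End.pow_apply]
    rfl
  have hinv : ∀ lam, ∀ v ∈ W lam, Φ v ∈ W lam := fun lam => wtSpace_stable φ lam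
  set f : ∀ lam : Module.Dual K S.h, Module.End K (W lam) :=
    fun lam => Φ.restrict (hinv lam) with hfdef
  -- coercion of powers of the restricted maps
  have hfpow : ∀ (lam) (m : ℕ) (x : W lam), (((f lam ^ m) x : W lam) : M) = (φ ^ m) (x : M) := by
    intro lam m x
    rw [hfdef, Module.End.pow_restrict, LinearMap.restrict_coe_apply, hΦφ]
  -- internal direct sum decomposition into weight spaces
  have hInternal : DirectSum.IsInternal W :=
    DirectSum.isInternal_submodule_of_iSupIndep_of_iSup_eq_top hM.indep hM.span
  set e := LinearEquiv.ofBijective (DirectSum.coeLinearMap W) hInternal with hedef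
  -- φ commutes with the projections onto the weight spaces
  have hkey : Φ ∘ₗ DirectSum.coeLinearMap W
      = DirectSum.coeLinearMap W ∘ₗ DFinsupp.mapRange.linearMap f := by
    refine DirectSum.linearMap_ext K fun i => ?_
    ext x
    simp only [LinearMap.coe_comp, Function.comp_apply, DirectSum.lof_eq_of,
      DirectSum.coeLinearMap_of]
    show Φ (x : M) = (DirectSum.coeLinearMap W)
        (DFinsupp.mapRange (fun i x => f i x) (fun i => (f i).map_zero) (DFinsupp.single i x))
    rw [DFinsupp.mapRange_single]
    show Φ (x : M) = (DirectSum.coeLinearMap W) (DirectSum.of (fun i => W i) i (f i x))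
    rw [DirectSum.coeLinearMap_of]
    exact (LinearMap.restrict_coe_apply _ _ _).symm
  have hcomm : ∀ (v : M) (lam), e.symm (Φ v) lam = f lam (e.symm v lam) := by
    intro v lam
    have hv : Φ v = DirectSum.coeLinearMap W (DFinsupp.mapRange.linearMap f (e.symm v)) := by
      conv_lhs => rw [show v = DirectSum.coeLinearMap W (e.symm v) from
        (e.apply_symm_apply v).symm]
      exact LinearMap.congr_fun hkey (e.symm v)
    have : e.symm (Φ v) = DFinsupp.mapRange.linearMap f (e.symm v) := by
      rw [hv]
      exact e.symm_apply_apply _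
    rw [this, DFinsupp.mapRange.linearMap_apply, DFinsupp.mapRange_apply]
  have hcommPow : ∀ (m : ℕ) (v : M) (lam), e.symm ((φ ^ m) v) lam = (f lam ^ m) (e.symm v lam) := by
    intro m
    induction m with
    | zero => intro v lam; simp
    | succ m ih =>
      intro v lam
      have h1 : (φ ^ (m + 1)) v = (φ ^ m) (φ v) := by
        rw [pow_succ, Module.End.mul_apply]
      have h2 : φ v = Φ v := rfl
      rw [h1, ih, h2, hcomm, pow_succ, Module.End.mul_apply]
  -- the two Fitting components
  set N0 : Submodule (Env K g) M := fittingZero φ with hN0def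
  set N1 : Submodule (Env K g) M := ⨅ k : ℕ, LinearMap.range (φ ^ k) with hN1def
  have hmemN0 : ∀ v : M, v ∈ N0 ↔ ∃ k : ℕ, (φ ^ k) v = 0 := fun v => Iff.rfl
  have hmemN1 : ∀ v : M, v ∈ N1 ↔ ∀ k : ℕ, ∃ u : M, (φ ^ k) u = v := by
    intro v
    rw [hN1def, Submodule.mem_iInf]
    exact forall_congr' fun k => Iff.rfl
  -- the Fitting decomposition on each finite-dimensional weight space
  have hFit : ∀ lam : Module.Dual K S.h, ∃ n : ℕ,
      IsCompl (LinearMap.ker (f lam ^ n)) (LinearMap.range (f lam ^ n)) ∧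
      (⨅ m, LinearMap.range (f lam ^ m)) = LinearMap.range (f lam ^ n) ∧
      (⨆ m, LinearMap.ker (f lam ^ m)) = LinearMap.ker (f lam ^ n) := by
    intro lam
    haveI := hM.finite lam
    obtain ⟨n, h1, h2, h3⟩ := (((f lam).eventually_isCompl_ker_pow_range_pow).and
      (((f lam).eventually_iInf_range_pow_eq).and
        ((f lam).eventually_iSup_ker_pow_eq))).exists
    exact ⟨n, h1, h2, h3⟩
  -- N0 and N1 are complementary
  have hcompl : IsCompl N0 N1 := by
    constructor
    · -- disjointness
      rw [Submodule.disjoint_def]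
      intro v hv0 hv1
      have hz : e.symm v = 0 := by
        refine DFunLike.ext _ _ fun lam => ?_
        obtain ⟨n, hC, hR, hK⟩ := hFit lam
        set x := e.symm v lam with hxdef
        obtain ⟨k, hk⟩ := (hmemN0 v).mp hv0
        have hxker : x ∈ LinearMap.ker (f lam ^ n) := by
          rw [← hK]
          have hxk : (f lam ^ k) x = 0 := by
            have := (hcommPow k v lam).symm
            rw [hk] at this
            simpa using this
          exact le_iSup (fun m => LinearMap.ker (f lam ^ m)) k (LinearMap.mem_ker.mpr hxk)
        have hxrange : x ∈ LinearMap.range (f lam ^ n) := by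
          rw [← hR, Submodule.mem_iInf]
          intro m
          obtain ⟨u, hu⟩ := (hmemN1 v).mp hv1 m
          exact ⟨e.symm u lam, by rw [← hcommPow, hu]⟩
        have : x ∈ (⊥ : Submodule K (W lam)) := hC.disjoint.le_bot ⟨hxker, hxrange⟩
        exact (Submodule.mem_bot K).mp this
      have := congrArg e hz
      rw [e.apply_symm_apply, map_zero] at this
      simpa using this
    · -- codisjointness
      rw [codisjoint_iff]
      have hle : (⊤ : Submodule K M) ≤ (N0 ⊔ N1).restrictScalars K := by
        rw [← hM.span]
        refine iSup_le fun lam => ?_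
        intro v hv
        obtain ⟨n, hC, hR, _⟩ := hFit lam
        have hvmem : (⟨v, hv⟩ : W lam) ∈
            LinearMap.ker (f lam ^ n) ⊔ LinearMap.range (f lam ^ n) := by
          rw [hC.codisjoint.eq_top]; trivial
        obtain ⟨a, ha, b, hb, hab⟩ := Submodule.mem_sup.mp hvmem
        have hva : v = (a : M) + (b : M) := by
          have := congrArg (fun y : W lam => (y : M)) hab
          simpa using this.symm
        have haN0 : (a : M) ∈ N0 := by
          refine ⟨n, ?_⟩
          have : (f lam ^ n) a = 0 := ha
          have h2 := hfpow lam n a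
          rw [this] at h2
          simpa using h2.symm
        have hbN1 : (b : M) ∈ N1 := by
          rw [hmemN1]
          intro m
          rw [← hR] at hb
          obtain ⟨u, hu⟩ := Submodule.mem_iInf _ |>.mp hb m
          refine ⟨(u : M), ?_⟩
          rw [← hfpow, hu]
        show v ∈ N0 ⊔ N1
        rw [hva]
        exact Submodule.add_mem_sup haN0 hbN1
      rw [eq_top_iff]
      intro v _
      exact hle (show v ∈ (⊤ : Submodule K M) from trivial)
  rcases hInd.2 N0 N1 hcompl with h0 | h1
  · -- N0 = ⊥ : φ is bijective
    left
    constructor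
    · rw [← LinearMap.ker_eq_bot (M := M) (f := φ)]
      rw [eq_bot_iff]
      intro v hv
      have : v ∈ N0 := ⟨1, by rwa [pow_one]⟩
      rw [h0] at this
      exact this
    · rw [← LinearMap.range_eq_top (f := φ)]
      have hN1top : N1 = ⊤ := by
        have := hcompl.codisjoint
        rw [codisjoint_iff, h0, bot_sup_eq] at this
        exact this
      rw [eq_top_iff, ← hN1top, hN1def]
      refine le_trans (iInf_le _ 1) ?_
      rw [pow_one]
  · -- N1 = ⊥ : φ is locally nilpotent
    right
    intro v
    have hN0top : N0 = ⊤ := by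
      have := hcompl.codisjoint
      rw [codisjoint_iff, h1, sup_bot_eq] at this
      exact this
    have hv : v ∈ N0 := by rw [hN0top]; trivial
    obtain ⟨k, hk⟩ := hv
    exact ⟨k, by rw [← Module.End.pow_apply]; exact hk⟩


end Paper
end
end

section
/- Let g be a root-reductive Lie algebra with splitting maximal toral subalgebra h and Dynkin Borel subalgebra b ⊇ h. For every indecomposable object M of the extended category O-bar, the endomorphism ring End_{O-bar}(M) is a local ring. -/
noncomputable section
namespace Paper

variable (K : Type) [Field K] [IsAlgClosed K] [CharZero K]
variable (g : Type) [LieRing g] [LieAlgebra K g]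

variable {K g}

variable {K : Type} [Field K] [IsAlgClosed K] [CharZero K]
variable {g : Type} [LieRing g] [LieAlgebra K g]

section LocalEndProof

variable {K : Type} [Field K] [IsAlgClosed K] [CharZero K]
variable {g : Type} [LieRing g] [LieAlgebra K g]
variable {M : Type} [AddCommGroup M] [Module K M] [Module (Env K g) M]
  [IsScalarTower K (Env K g) M]

instance : SMulCommClass (Env K g) K M := ⟨fun r c m => env_smul_comm c r m⟩
instance : SMulCommClass K (Env K g) M := ⟨fun c r m => (env_smul_comm c r m).symm⟩

lemma end_map_smulK (f : Module.End (Env K g) M) (c : K) (m : M) : f (c • m) = c • f m := by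
  rw [← algebraMap_smul (Env K g) c m, f.map_smul, algebraMap_smul]

lemma mem_wtSpace {S : Setup K g} {lam : Module.Dual K S.h} {m : M} :
    m ∈ S.wtSpace M lam ↔
      ∀ H : S.h, UniversalEnvelopingAlgebra.ι K (H : g) • m = lam H • m := Iff.rfl

lemma wt_stable (S : Setup K g) (T : Module.End (Env K g) M) (lam : Module.Dual K S.h)
    {m : M} (hm : m ∈ S.wtSpace M lam) : T m ∈ S.wtSpace M lam := by
  rw [mem_wtSpace]
  intro H
  rw [← T.map_smul, mem_wtSpace.mp hm H, end_map_smulK]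

/-- restriction of an endomorphism to a weight space. -/
def restrictWt (S : Setup K g) (T : Module.End (Env K g) M) (lam : Module.Dual K S.h) :
    Module.End K (S.wtSpace M lam) where
  toFun x := ⟨T x, wt_stable S T lam x.2⟩
  map_add' x y := Subtype.ext (T.map_add x y)
  map_smul' c x := Subtype.ext (by
    show T ((c • x : S.wtSpace M lam) : M) = c • T (x : M)
    rw [SetLike.val_smul, end_map_smulK])

lemma restrictWt_pow_coe (S : Setup K g) (T : Module.End (Env K g) M)
    (lam : Module.Dual K S.h) (n : ℕ) :
    ∀ x : S.wtSpace M lam, (((restrictWt S T lam) ^ n) x : M) = (T ^ n) (x : M) := by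
  induction n with
  | zero => intro x; simp
  | succ n ih =>
    intro x
    have h1 : (((restrictWt S T lam) ^ (n + 1)) x : M)
        = T (((restrictWt S T lam) ^ n) x : M) := by
      rw [pow_succ', Module.End.mul_apply]; rfl
    rw [h1, ih x, pow_succ', Module.End.mul_apply]

/-- weight components of an element of a submodule lie in the submodule. -/
lemma component_mem (S : Setup K g) (N : Submodule (Env K g) M)
    (s : Finset (Module.Dual K S.h)) :
    ∀ v : Module.Dual K S.h → M, (∀ l ∈ s, v l ∈ S.wtSpace M l) →
      (∑ l ∈ s, v l) ∈ N → ∀ l0 ∈ s, v l0 ∈ N := by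
  classical
  induction s using Finset.strongInduction with
  | _ s ih =>
    intro v hv hsum l0 hl0
    by_cases hex : ∃ mu ∈ s, mu ≠ l0
    · obtain ⟨mu, hmu, hne⟩ := hex
      obtain ⟨H, hH⟩ : ∃ H : S.h, l0 H ≠ mu H := by
        by_contra hcon
        push_neg at hcon
        exact hne (LinearMap.ext fun H => (hcon H).symm)
      set d : K := l0 H - mu H with hd
      have hd0 : d ≠ 0 := sub_ne_zero.mpr hH
      set v' : Module.Dual K S.h → M := fun l => d⁻¹ • ((l H - mu H) • v l) with hv'def
      have hv'wt : ∀ l ∈ s.erase mu, v' l ∈ S.wtSpace M l := fun l hl =>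
        Submodule.smul_mem _ _ (Submodule.smul_mem _ _ (hv l (Finset.mem_of_mem_erase hl)))
      have key : ∑ l ∈ s, v' l
          = d⁻¹ • (UniversalEnvelopingAlgebra.ι K (H : g) • (∑ l ∈ s, v l)
              - (mu H) • ∑ l ∈ s, v l) := by
        rw [← Finset.smul_sum]
        congr 1
        rw [Finset.smul_sum, Finset.smul_sum, ← Finset.sum_sub_distrib]
        refine Finset.sum_congr rfl fun l hl => ?_
        rw [sub_smul, ← mem_wtSpace.mp (hv l hl) H]
      have hmem : (∑ l ∈ s, v' l) ∈ N := by
        rw [key]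
        have h1 : UniversalEnvelopingAlgebra.ι K (H : g) • (∑ l ∈ s, v l) ∈ N :=
          N.smul_mem _ hsum
        have h2 : (mu H) • (∑ l ∈ s, v l) ∈ N := by
          rw [← algebraMap_smul (Env K g) (mu H)]
          exact N.smul_mem _ hsum
        have h3 := N.sub_mem h1 h2
        rw [← algebraMap_smul (Env K g) d⁻¹]
        exact N.smul_mem _ h3
      have hv'mu : v' mu = 0 := by simp [hv'def]
      have hsum' : (∑ l ∈ s.erase mu, v' l) ∈ N := by
        rwa [Finset.sum_erase s hv'mu]
      have hmem' := ih (s.erase mu) (Finset.erase_ssubset hmu) v' hv'wt hsum' l0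
        (Finset.mem_erase.mpr ⟨hne.symm, hl0⟩)
      have : v' l0 = v l0 := by
        rw [hv'def]
        show d⁻¹ • (d • v l0) = v l0
        rw [smul_smul, inv_mul_cancel₀ hd0, one_smul]
      rwa [this] at hmem'
    · push_neg at hex
      have hs : s = {l0} := Finset.eq_singleton_iff_unique_mem.mpr ⟨hl0, hex⟩
      rw [hs, Finset.sum_singleton] at hsum
      exact hsum

/-- a sum of weight vectors vanishes only if each component vanishes. -/
lemma indep_sum_zero (S : Setup K g) (hM : S.InO M) (t : Finset (Module.Dual K S.h))
    (z : Module.Dual K S.h → M) (hz : ∀ l ∈ t, z l ∈ S.wtSpace M l)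
    (hzero : ∑ l ∈ t, z l = 0) : ∀ l ∈ t, z l = 0 := by
  classical
  intro l hl
  have h1 : z l = -∑ m ∈ t.erase l, z m := by
    rw [← Finset.add_sum_erase t z hl] at hzero
    exact eq_neg_of_add_eq_zero_left hzero
  have h2 : z l ∈ S.wtSpace M l ⊓ ⨆ m ∈ {m : Module.Dual K S.h | m ≠ l}, S.wtSpace M m := by
    refine Submodule.mem_inf.mpr ⟨hz l hl, ?_⟩
    rw [h1]
    refine Submodule.neg_mem _ (Submodule.sum_mem _ fun m hm => ?_)
    exact Submodule.mem_iSup_of_mem m (Submodule.mem_iSup_of_mem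
      ((Finset.mem_erase.mp hm).1) (hz m (Finset.mem_erase.mp hm).2))
  have hd := hM.indep.disjoint_biSup (x := l) (y := {m : Module.Dual K S.h | m ≠ l})
    (by simp)
  simpa using hd.le_bot h2

/-- `a • 1 + G` is a unit when `a ≠ 0` and `G` is locally nilpotent. -/
lemma isUnit_smul_one_add (a : K) (ha : a ≠ 0) (G : Module.End (Env K g) M)
    (hG : ∀ x : M, ∃ n, (G ^ n) x = 0) :
    IsUnit (a • (1 : Module.End (Env K g) M) + G) := by
  classical
  rw [Module.End.isUnit_iff]
  constructor
  · have h0 : ∀ x : M, (a • (1 : Module.End (Env K g) M) + G) x = 0 → x = 0 := by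
      intro x hx
      have hGx : G x = -(a • x) := by
        have hax : a • x + G x = 0 := by
          simpa [LinearMap.add_apply, LinearMap.smul_apply] using hx
        exact eq_neg_of_add_eq_zero_right hax
      have hpow : ∀ n : ℕ, (G ^ n) x = ((-a) ^ n) • x := by
        intro n
        induction n with
        | zero => simp
        | succ n ih =>
          calc (G ^ (n + 1)) x = (G ^ n) (G x) := by rw [pow_succ, Module.End.mul_apply]
            _ = -(a • (G ^ n) x) := by rw [hGx, map_neg, end_map_smulK]
            _ = ((-a) ^ (n + 1)) • x := by
                rw [ih, smul_smul, ← neg_smul, pow_succ]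
                congr 1
                ring
      obtain ⟨n, hn⟩ := hG x
      rw [hpow n] at hn
      exact (smul_eq_zero.mp hn).resolve_left (pow_ne_zero n (neg_ne_zero.mpr ha))
    intro x y hxy
    have := h0 (x - y) (by rw [map_sub, hxy, sub_self])
    exact sub_eq_zero.mp this
  · intro y
    obtain ⟨n, hn⟩ := hG y
    refine ⟨∑ k ∈ Finset.range n, ((-1 : K) ^ k * a⁻¹ ^ (k + 1)) • (G ^ k) y, ?_⟩
    have key : ∀ k : ℕ,
        a • (((-1 : K) ^ k * a⁻¹ ^ (k + 1)) • (G ^ k) y)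
          + ((-1 : K) ^ k * a⁻¹ ^ (k + 1)) • (G ^ (k + 1)) y
        = ((-1 : K) ^ k * a⁻¹ ^ k) • (G ^ k) y
          - ((-1 : K) ^ (k + 1) * a⁻¹ ^ (k + 1)) • (G ^ (k + 1)) y := by
      intro k
      have s1 : a * ((-1 : K) ^ k * a⁻¹ ^ (k + 1)) = (-1 : K) ^ k * a⁻¹ ^ k := by
        rw [pow_succ, mul_left_comm a, mul_comm (a⁻¹ ^ k) a⁻¹, ← mul_assoc a,
          mul_inv_cancel₀ ha, one_mul]
      have s2 : ((-1 : K) ^ k * a⁻¹ ^ (k + 1))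
          = -((-1 : K) ^ (k + 1) * a⁻¹ ^ (k + 1)) := by ring
      rw [smul_smul, s1, s2, neg_smul, ← sub_eq_add_neg]
    have expand : (a • (1 : Module.End (Env K g) M) + G)
        (∑ k ∈ Finset.range n, ((-1 : K) ^ k * a⁻¹ ^ (k + 1)) • (G ^ k) y)
        = ∑ k ∈ Finset.range n,
          (((-1 : K) ^ k * a⁻¹ ^ k) • (G ^ k) y
            - ((-1 : K) ^ (k + 1) * a⁻¹ ^ (k + 1)) • (G ^ (k + 1)) y) := by
      rw [LinearMap.add_apply, LinearMap.smul_apply, Module.End.one_apply, map_sum,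
        Finset.smul_sum, ← Finset.sum_add_distrib]
      refine Finset.sum_congr rfl fun k _ => ?_
      rw [end_map_smulK, ← Module.End.mul_apply, ← pow_succ']
      exact key k
    rw [expand, Finset.sum_range_sub' (fun k => ((-1 : K) ^ k * a⁻¹ ^ k) • (G ^ k) y) n]
    simp [hn]

end LocalEndProof

/-- For every indecomposable object `M` of `O-bar`, the endomorphism
ring `End(M)` is a local ring. -/
theorem endomorphism_ring_isLocalRing
    (K : Type) [Field K] [IsAlgClosed K] [CharZero K]
    (g : Type) [LieRing g] [LieAlgebra K g] (S : Setup K g) (hDynkin : S.IsDynkin)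
    (M : Type) [AddCommGroup M] [Module K M] [Module (Env K g) M]
    [IsScalarTower K (Env K g) M]
    (hM : S.InO M) (hInd : Indecomposable (K := K) (g := g) M) :
    IsLocalRing (Module.End (Env K g) M) := by
  classical
  -- M is nontrivial
  obtain ⟨m0, hm0⟩ : ∃ m : M, m ≠ 0 := by
    by_contra h
    push_neg at h
    apply hInd.1
    ext x
    simp [h x]
  haveI : Nontrivial (Module.End (Env K g) M) :=
    ⟨1, 0, fun h => hm0 (by simpa using LinearMap.congr_fun h m0)⟩
  constructor
  intro f b hab
  rw [eq_sub_of_add_eq' hab]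
  -- a nonzero weight space
  obtain ⟨l0, hl0⟩ : ∃ l : Module.Dual K S.h, S.wtSpace M l ≠ ⊥ := by
    by_contra h
    push_neg at h
    have htop : (⊤ : Submodule K M) = ⊥ := by
      rw [← hM.span]
      exact iSup_eq_bot.mpr h
    exact hm0 ((Submodule.mem_bot K).mp (htop ▸ Submodule.mem_top))
  haveI := hM.finite l0
  haveI : Nontrivial (S.wtSpace M l0) := Submodule.nontrivial_iff_ne_bot.mpr hl0
  -- an eigenvalue of f on that weight space
  obtain ⟨c, hc⟩ := Module.End.exists_eigenvalue (restrictWt S f l0)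
  obtain ⟨v0, hv0⟩ := hc.exists_hasEigenvector
  set G : Module.End (Env K g) M := f - c • 1 with hGdef
  have hGv0 : G ((v0 : M)) = 0 := by
    have h1 : f (v0 : M) = c • (v0 : M) := congrArg Subtype.val hv0.apply_eq_smul
    simp [hGdef, LinearMap.sub_apply, LinearMap.smul_apply, Module.End.one_apply, h1]
  -- kernels are monotone
  have hker_mono : Monotone fun n : ℕ => LinearMap.ker (G ^ n) := by
    intro p q hpq x hx
    rw [LinearMap.mem_ker] at hx ⊢
    have hGq : G ^ q = G ^ (q - p) * G ^ p := by rw [← pow_add, Nat.sub_add_cancel hpq]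
    rw [hGq, Module.End.mul_apply, hx, map_zero]
  set N₁ : Submodule (Env K g) M := ⨆ n : ℕ, LinearMap.ker (G ^ n) with hN₁def
  set N₂ : Submodule (Env K g) M := ⨅ n : ℕ, LinearMap.range (G ^ n) with hN₂def
  -- ker stabilization on each weight space
  have hstab : ∀ l : Module.Dual K S.h, ∀ k : ℕ,
      LinearMap.ker ((restrictWt S G l) ^ (Module.finrank K (S.wtSpace M l) + k))
        = LinearMap.ker ((restrictWt S G l) ^ Module.finrank K (S.wtSpace M l)) := by
    intro l k
    haveI := hM.finite l
    exact Module.End.ker_pow_eq_ker_pow_finrank_of_le (Nat.le_add_right _ _)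
  -- disjointness
  have hdisj : Disjoint N₁ N₂ := by
    rw [disjoint_iff_inf_le]
    intro x hx
    obtain ⟨hx1, hx2⟩ := Submodule.mem_inf.mp hx
    rw [Submodule.mem_bot]
    have hxtop : x ∈ ⨆ lam : Module.Dual K S.h, S.wtSpace M lam := by
      rw [hM.span]; trivial
    obtain ⟨w, hw, hwsum⟩ := (Submodule.mem_iSup_iff_exists_finsupp _ _).mp hxtop
    have hsx : ∑ a ∈ w.support, w a = x := hwsum
    rw [← hsx]
    apply Finset.sum_eq_zero
    intro l hl
    have hcomp1 : w l ∈ N₁ := component_mem S N₁ w.support (fun a => w a)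
      (fun a _ => hw a) (hsx ▸ hx1) l hl
    have hcomp2 : w l ∈ N₂ := component_mem S N₂ w.support (fun a => w a)
      (fun a _ => hw a) (hsx ▸ hx2) l hl
    haveI := hM.finite l
    set u := restrictWt S G l with hu
    set n₀ := Module.finrank K (S.wtSpace M l) with hn₀
    obtain ⟨n, hn⟩ := (Submodule.mem_iSup_of_directed _ hker_mono.directed_le).mp hcomp1
    obtain ⟨z, hz⟩ := (Submodule.mem_iInf _).mp hcomp2 n₀
    -- decompose z into weight components
    have hztop : z ∈ ⨆ lam : Module.Dual K S.h, S.wtSpace M lam := by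
      rw [hM.span]; trivial
    obtain ⟨p, hp, hpsum⟩ := (Submodule.mem_iSup_iff_exists_finsupp _ _).mp hztop
    have hsz : ∑ a ∈ p.support, p a = z := hpsum
    set t := insert l p.support with ht
    have hq0 : ∀ m ∈ t, (G ^ n₀) (p m) - (if m = l then w l else 0) ∈ S.wtSpace M m := by
      intro m _
      refine Submodule.sub_mem _ (wt_stable S (G ^ n₀) m (hp m)) ?_
      by_cases hml : m = l
      · subst hml; simpa using hw m
      · simp [hml]
    have hqsum : ∑ m ∈ t, ((G ^ n₀) (p m) - (if m = l then w l else 0)) = 0 := by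
      rw [Finset.sum_sub_distrib]
      have h1 : ∑ m ∈ t, (G ^ n₀) (p m) = (G ^ n₀) z := by
        rw [← map_sum]
        congr 1
        rw [← hsz]
        exact (Finset.sum_subset (Finset.subset_insert l p.support)
          (fun m _ hm => Finsupp.notMem_support_iff.mp hm)).symm
      have h2 : ∑ m ∈ t, (if m = l then w l else 0) = w l := by
        rw [Finset.sum_ite_eq' t l (fun _ => w l), if_pos (Finset.mem_insert_self l _)]
      rw [h1, h2, hz, sub_self]
    have hq := indep_sum_zero S hM t _ hq0 hqsum l (Finset.mem_insert_self l p.support)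
    have hwl : w l = (G ^ n₀) (p l) := by
      rw [if_pos rfl] at hq
      exact (sub_eq_zero.mp hq).symm
    set y : S.wtSpace M l := ⟨w l, hw l⟩ with hy
    have hyk : (u ^ n) y = 0 :=
      Subtype.ext (by rw [restrictWt_pow_coe]; exact LinearMap.mem_ker.mp hn)
    have hyr : y = (u ^ n₀) ⟨p l, hp l⟩ :=
      Subtype.ext (by rw [restrictWt_pow_coe]; exact hwl)
    have hker2 : (⟨p l, hp l⟩ : S.wtSpace M l) ∈ LinearMap.ker (u ^ (n₀ + n)) := by
      rw [LinearMap.mem_ker, add_comm, pow_add, Module.End.mul_apply, ← hyr, hyk]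
    rw [hstab l n] at hker2
    rw [LinearMap.mem_ker] at hker2
    have hy0 : y = 0 := by rw [hyr, hker2]
    simpa [hy] using congrArg Subtype.val hy0
  -- codisjointness
  have hcodis : Codisjoint N₁ N₂ := by
    rw [codisjoint_iff, eq_top_iff]
    intro x _
    have hxtop : x ∈ ⨆ lam : Module.Dual K S.h, S.wtSpace M lam := by
      rw [hM.span]; trivial
    obtain ⟨w, hw, hwsum⟩ := (Submodule.mem_iSup_iff_exists_finsupp _ _).mp hxtop
    have hsx : ∑ a ∈ w.support, w a = x := hwsum
    rw [← hsx]
    refine Submodule.sum_mem _ fun l _ => ?_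
    haveI := hM.finite l
    set u := restrictWt S G l with hu
    set n₀ := Module.finrank K (S.wtSpace M l) with hn₀
    have hdisjV : Disjoint (LinearMap.ker (u ^ n₀)) (LinearMap.range (u ^ n₀)) := by
      rw [disjoint_iff_inf_le]
      intro v hv
      obtain ⟨hv1, hv2⟩ := Submodule.mem_inf.mp hv
      obtain ⟨zz, hzz⟩ := hv2
      have hker2 : zz ∈ LinearMap.ker (u ^ (n₀ + n₀)) := by
        rw [LinearMap.mem_ker, pow_add, Module.End.mul_apply, hzz]
        exact LinearMap.mem_ker.mp hv1
      rw [hstab l n₀, LinearMap.mem_ker] at hker2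
      rw [Submodule.mem_bot, ← hzz, hker2]
    have htopV : LinearMap.ker (u ^ n₀) ⊔ LinearMap.range (u ^ n₀) = ⊤ := by
      rw [sup_comm]
      exact Submodule.eq_top_of_disjoint _ _
        (LinearMap.finrank_range_add_finrank_ker (u ^ n₀)).ge hdisjV.symm
    have hy : (⟨w l, hw l⟩ : S.wtSpace M l)
        ∈ LinearMap.ker (u ^ n₀) ⊔ LinearMap.range (u ^ n₀) := htopV ▸ Submodule.mem_top
    obtain ⟨a, ha, b, hb, hab⟩ := Submodule.mem_sup.mp hy
    have hw_eq : w l = (a : M) + (b : M) := by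
      have hcoe := congrArg Subtype.val hab
      simpa using hcoe.symm
    rw [hw_eq]
    refine Submodule.add_mem _ (Submodule.mem_sup_left ?_) (Submodule.mem_sup_right ?_)
    · refine Submodule.mem_iSup_of_mem n₀ ?_
      rw [LinearMap.mem_ker]
      have hcoe := congrArg Subtype.val (LinearMap.mem_ker.mp ha)
      rwa [restrictWt_pow_coe] at hcoe
    · refine (Submodule.mem_iInf _).mpr fun m => ?_
      have hstabr : LinearMap.range (u ^ (n₀ + m)) = LinearMap.range (u ^ n₀) := by
        refine Submodule.eq_of_le_of_finrank_eq ?_ ?_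
        · rintro v ⟨zz, rfl⟩
          exact ⟨(u ^ m) zz, by rw [← Module.End.mul_apply, ← pow_add]⟩
        · have e1 := LinearMap.finrank_range_add_finrank_ker (u ^ (n₀ + m))
          have e2 := LinearMap.finrank_range_add_finrank_ker (u ^ n₀)
          rw [hstab l m] at e1
          exact Nat.add_right_cancel (e1.trans e2.symm)
      rw [← hstabr] at hb
      obtain ⟨zz, hzz⟩ := hb
      refine ⟨(G ^ n₀) ((zz : M)), ?_⟩
      have hcoe := congrArg Subtype.val hzz
      rw [restrictWt_pow_coe] at hcoe
      rw [← Module.End.mul_apply, ← pow_add, add_comm m n₀, hcoe]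
  -- indecomposability
  have hN1ne : N₁ ≠ ⊥ := by
    intro hbot
    have hv : (v0 : M) ∈ N₁ := Submodule.mem_iSup_of_mem 1
      (by rw [LinearMap.mem_ker, pow_one]; exact hGv0)
    rw [hbot, Submodule.mem_bot] at hv
    exact hv0.2 (Subtype.ext hv)
  have hN2bot : N₂ = ⊥ := by
    rcases hInd.2 N₁ N₂ ⟨hdisj, hcodis⟩ with h | h
    · exact absurd h hN1ne
    · exact h
  have hN1top : N₁ = ⊤ := by
    have := hcodis
    rw [hN2bot, codisjoint_bot] at this
    exact this
  have locnil : ∀ x : M, ∃ n, (G ^ n) x = 0 := by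
    intro x
    have hxN : x ∈ N₁ := hN1top ▸ Submodule.mem_top
    obtain ⟨n, hn⟩ := (Submodule.mem_iSup_of_directed _ hker_mono.directed_le).mp hxN
    exact ⟨n, LinearMap.mem_ker.mp hn⟩
  rcases eq_or_ne c 0 with hc0 | hc0
  · right
    have hGf : G = f := by rw [hGdef, hc0, zero_smul, sub_zero]
    have hG' : ∀ x : M, ∃ n, ((-f) ^ n) x = 0 := by
      intro x
      obtain ⟨n, hn⟩ := locnil x
      refine ⟨n, ?_⟩
      rw [neg_pow, Module.End.mul_apply, ← hGf, hn, map_zero]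
    have h1f : (1 : Module.End (Env K g) M) - f = (1 : K) • 1 + (-f) := by
      rw [one_smul, sub_eq_add_neg]
    rw [h1f]
    exact isUnit_smul_one_add 1 one_ne_zero (-f) hG'
  · left
    have hfG : f = c • (1 : Module.End (Env K g) M) + G := by rw [hGdef]; abel
    rw [hfG]
    exact isUnit_smul_one_add c hc0 G locnil


end Paper
end
end
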